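/- arXiv:2309.06913 — 2 statements merged into one kernel-verified Lean document; each statement's English description precedes it below -/
import Mathlib

section
/- Let ν and μ be finite measures on (X,𝒜) and ε > 0. Then there exists a countable measurable partition 𝒟 of X such that for every B ∈ 𝒟 with μ(B) > 0, the set {ν(C)/μ(C) : C ⊆ B measurable, μ(C) > 0} is bounded above and sup − inf ≤ ε, where sup and inf are taken over this set. -/
open MeasureTheory

/-- The set of ratios `ν(C)/μ(C)` over measurable `C ⊆ B` with `μ(C) > 0`. -/
def ratioSet {X : Type*} [MeasurableSpace X] (ν μ : Measure X) (B : Set X) : Set ℝ :=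
  {r : ℝ | ∃ C : Set X, MeasurableSet C ∧ C ⊆ B ∧ 0 < μ C ∧
    r = (ν C).toReal / (μ C).toReal}

/-- for every `ε > 0` there is a countable measurable partition `𝒟`
of `X` such that on every `B ∈ 𝒟` of positive `μ`-measure the ratio set is bounded
above and `sup − inf ≤ ε`. -/
theorem exists_partition_ratio_approx {X : Type*} [MeasurableSpace X]
    (ν μ : Measure X) [IsFiniteMeasure ν] [IsFiniteMeasure μ]
    (ε : ℝ) (hε : 0 < ε) :
    ∃ D : ℕ → Set X,
      (∀ n, MeasurableSet (D n)) ∧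
      Pairwise (Function.onFun Disjoint D) ∧
      (⋃ n, D n) = Set.univ ∧
      ∀ n, 0 < μ (D n) →
        BddAbove (ratioSet ν μ (D n)) ∧
        sSup (ratioSet ν μ (D n)) - sInf (ratioSet ν μ (D n)) ≤ ε := by
  -- Hahn decompositions of ν against (kε)·μ
  have H : ∀ k : ℕ, ∃ s : Set X, MeasurableSet s ∧
      (∀ t, MeasurableSet t → t ⊆ s → ν t ≤ ENNReal.ofReal (k * ε) * μ t) ∧
      (∀ t, MeasurableSet t → t ⊆ sᶜ → ENNReal.ofReal (k * ε) * μ t ≤ ν t) := by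
    intro k
    obtain ⟨s, hs, h1, h2⟩ :=
      hahn_decomposition (μ := ((k * ε).toNNReal : NNReal) • μ) (ν := ν)
    have key : ∀ t : Set X, (((k * ε).toNNReal : NNReal) • μ) t = ENNReal.ofReal (k * ε) * μ t := by
      intro t
      simp [Measure.smul_apply, ENNReal.ofReal, smul_eq_mul]
    refine ⟨s, hs, fun t ht hts => ?_, fun t ht hts => ?_⟩
    · simpa [key t] using h1 t ht hts
    · simpa [key t] using h2 t ht hts
  choose s hs hsub hsup using H
  classical
  refine ⟨fun n => Nat.rec (⋂ k, (s k)ᶜ) (fun m _ => s m \ ⋃ i < m, s i) n, ?_, ?_, ?_, ?_⟩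
  · rintro (_ | m)
    · exact MeasurableSet.iInter fun k => (hs k).compl
    · exact (hs m).diff (MeasurableSet.iUnion fun i => MeasurableSet.iUnion fun _ => hs i)
  · rintro (_ | m) (_ | n) hmn
    · simp at hmn
    · exact Set.disjoint_left.2 fun x hx hx' =>
        (Set.mem_iInter.1 hx n) hx'.1
    · exact Set.disjoint_left.2 fun x hx hx' =>
        (Set.mem_iInter.1 hx' m) hx.1
    · rcases lt_or_gt_of_ne (fun h : m = n => hmn (by rw [h])) with h | h
      · exact Set.disjoint_left.2 fun x hx hx' =>
          hx'.2 (Set.mem_iUnion₂.2 ⟨m, h, hx.1⟩)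
      · exact Set.disjoint_left.2 fun x hx hx' =>
          hx.2 (Set.mem_iUnion₂.2 ⟨n, h, hx'.1⟩)
  · ext x
    simp only [Set.mem_iUnion, Set.mem_univ, iff_true]
    by_cases h : ∃ k, x ∈ s k
    · refine ⟨Nat.find h + 1, Nat.find_spec h, fun hx => ?_⟩
      obtain ⟨i, hi, hxi⟩ := Set.mem_iUnion₂.1 hx
      exact Nat.find_min h hi hxi
    · exact ⟨0, Set.mem_iInter.2 fun k => fun hx => h ⟨k, hx⟩⟩
  · -- main estimate
    have toReal_le : ∀ (k : ℕ) (t : Set X), MeasurableSet t → t ⊆ s k →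
        (ν t).toReal ≤ k * ε * (μ t).toReal := by
      intro k t ht hts
      have h := hsub k t ht hts
      have := ENNReal.toReal_mono (by
        exact ENNReal.mul_ne_top ENNReal.ofReal_ne_top (measure_ne_top μ t)) h
      rwa [ENNReal.toReal_mul, ENNReal.toReal_ofReal
        (by positivity : (0:ℝ) ≤ (k : ℝ) * ε)] at this
    have le_toReal : ∀ (k : ℕ) (t : Set X), MeasurableSet t → t ⊆ (s k)ᶜ →
        k * ε * (μ t).toReal ≤ (ν t).toReal := by
      intro k t ht hts
      have h := hsup k t ht hts
      have := ENNReal.toReal_mono (measure_ne_top ν t) h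
      rwa [ENNReal.toReal_mul, ENNReal.toReal_ofReal
        (by positivity : (0:ℝ) ≤ (k : ℝ) * ε)] at this
    rintro (_ | n) hpos
    · -- the residual set has measure zero
      exfalso
      set R : Set X := ⋂ k, (s k)ᶜ with hR
      have hRm : MeasurableSet R := MeasurableSet.iInter fun k => (hs k).compl
      have hμR : 0 < (μ R).toReal :=
        ENNReal.toReal_pos hpos.ne' (measure_ne_top μ R)
      obtain ⟨k, hk⟩ := exists_nat_gt ((ν R).toReal / (ε * (μ R).toReal))
      have := le_toReal k R hRm (fun x hx => Set.mem_iInter.1 hx k)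
      have hk' : (ν R).toReal < k * ε * (μ R).toReal := by
        rw [div_lt_iff₀ (by positivity)] at hk
        nlinarith
      linarith
    · -- D (n+1) = s n \ ⋃ i < n, s i
      set B : Set X := s n \ ⋃ i < n, s i with hB
      have hBm : MeasurableSet B :=
        (hs n).diff (MeasurableSet.iUnion fun i => MeasurableSet.iUnion fun _ => hs i)
      have hne : (ratioSet ν μ B).Nonempty :=
        ⟨_, B, hBm, Set.Subset.rfl, hpos, rfl⟩
      have hub : ∀ r ∈ ratioSet ν μ B, r ≤ n * ε := by
        rintro r ⟨C, hC, hCB, hμC, rfl⟩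
        have hμC' : 0 < (μ C).toReal := ENNReal.toReal_pos hμC.ne' (measure_ne_top μ C)
        have := toReal_le n C hC (fun x hx => (hCB hx).1)
        rw [div_le_iff₀ hμC']
        linarith
      have hlb : ∀ r ∈ ratioSet ν μ B, n * ε - ε ≤ r := by
        rintro r ⟨C, hC, hCB, hμC, rfl⟩
        have hμC' : 0 < (μ C).toReal := ENNReal.toReal_pos hμC.ne' (measure_ne_top μ C)
        rcases Nat.eq_zero_or_pos n with hn | hn
        · have hr : 0 ≤ (ν C).toReal / (μ C).toReal := by positivity
          simp only [hn, Nat.cast_zero, zero_mul, zero_sub]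
          linarith
        · obtain ⟨m, rfl⟩ := Nat.exists_eq_succ_of_ne_zero hn.ne'
          have hCc : C ⊆ (s m)ᶜ := fun x hx hxs =>
            (hCB hx).2 (Set.mem_iUnion₂.2 ⟨m, Nat.lt_succ_self m, hxs⟩)
          have := le_toReal m C hC hCc
          rw [le_div_iff₀ hμC']
          push_cast
          nlinarith
      refine ⟨⟨n * ε, hub⟩, ?_⟩
      have h1 : sSup (ratioSet ν μ B) ≤ n * ε := csSup_le hne hub
      have h2 : n * ε - ε ≤ sInf (ratioSet ν μ B) := le_csInf hne hlb
      linarith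
end

section
/- Let ν, μ be finite measures on (X,𝒜) and 𝒟 a countable measurable partition. Define f⁻_𝒟 as the step function taking value inf_{C⊆B,μ(C)>0} ν(C)/μ(C) on each B ∈ 𝒟 with μ(B) > 0, and 0 elsewhere. Then for every A ∈ 𝒜, ∫_A f⁻_𝒟 dμ ≤ ν(A). -/
open MeasureTheory ENNReal

/-- `inf_{C ⊆ B, μ(C) > 0} ν(C)/μ(C)`. -/
noncomputable def ratioInf {X : Type*} [MeasurableSpace X]
    (ν μ : Measure X) (B : Set X) : ℝ≥0∞ :=
  ⨅ C ∈ {C : Set X | MeasurableSet C ∧ C ⊆ B ∧ 0 < μ C}, ν C / μ C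

/-- The lower step function `f⁻_𝒟` determined by a countable measurable
partition `𝒟 = (D n)`: on a block `B` of positive `μ`-measure it takes the value
`inf_{C ⊆ B, μ(C) > 0} ν(C)/μ(C)`, and `0` elsewhere. -/
noncomputable def stepInf {X : Type*} [MeasurableSpace X]
    (ν μ : Measure X) (D : ℕ → Set X) : X → ℝ≥0∞ :=
  fun s => ∑' n, (D n).indicator
    (fun _ => if 0 < μ (D n) then ratioInf ν μ (D n) else 0) s

lemma ratioInf_le {X : Type*} [MeasurableSpace X]
    (ν μ : Measure X) {B C : Set X} (hC : MeasurableSet C) (hCB : C ⊆ B)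
    (hμC : 0 < μ C) : ratioInf ν μ B ≤ ν C / μ C := by
  exact biInf_le _ ⟨hC, hCB, hμC⟩

/-- `∫_A f⁻_𝒟 dμ ≤ ν(A)` for every measurable `A`. -/
theorem stepInf_lintegral_le {X : Type*} [MeasurableSpace X]
    (ν μ : Measure X) [IsFiniteMeasure ν] [IsFiniteMeasure μ]
    (D : ℕ → Set X)
    (hDm : ∀ n, MeasurableSet (D n))
    (hDd : Pairwise (Function.onFun Disjoint D))
    (hDu : (⋃ n, D n) = Set.univ) :
    ∀ A : Set X, MeasurableSet A →
      ∫⁻ s in A, stepInf ν μ D s ∂μ ≤ ν A := by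
  intro A hA
  have key : ∀ n, (if 0 < μ (D n) then ratioInf ν μ (D n) else 0) * μ (A ∩ D n)
      ≤ ν (A ∩ D n) := by
    intro n
    by_cases hpos : 0 < μ (A ∩ D n)
    · have hDn : 0 < μ (D n) := lt_of_lt_of_le hpos (measure_mono Set.inter_subset_right)
      rw [if_pos hDn]
      calc ratioInf ν μ (D n) * μ (A ∩ D n)
          ≤ ν (A ∩ D n) / μ (A ∩ D n) * μ (A ∩ D n) :=
            mul_le_mul_left (ratioInf_le ν μ (hA.inter (hDm n))
              Set.inter_subset_right hpos) _
        _ = ν (A ∩ D n) := ENNReal.div_mul_cancel hpos.ne' (measure_ne_top μ _)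
    · simp only [not_lt, le_zero_iff] at hpos
      rw [hpos, mul_zero]
      exact zero_le
  calc ∫⁻ s in A, stepInf ν μ D s ∂μ
      = ∑' n, ∫⁻ s in A, (D n).indicator
          (fun _ => if 0 < μ (D n) then ratioInf ν μ (D n) else 0) s ∂μ := by
        unfold stepInf
        exact lintegral_tsum fun n => ((measurable_const.indicator (hDm n)).aemeasurable)
    _ = ∑' n, (if 0 < μ (D n) then ratioInf ν μ (D n) else 0) * μ (A ∩ D n) := by
        congr 1; ext n
        rw [lintegral_indicator (hDm n) _, setLIntegral_const,
          Measure.restrict_apply (hDm n), Set.inter_comm]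
    _ ≤ ∑' n, ν (A ∩ D n) := ENNReal.tsum_le_tsum key
    _ = ν (⋃ n, A ∩ D n) := by
        rw [measure_iUnion (fun i j hij => (hDd hij).mono
          Set.inter_subset_right Set.inter_subset_right)
          (fun n => hA.inter (hDm n))]
    _ = ν A := by rw [← Set.inter_iUnion, hDu, Set.inter_univ]
end
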